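/- arXiv:2503.04101 — 5 statements merged into one kernel-verified Lean document; each statement's English description precedes it below -/
import Mathlib

section
/- Let G be a 2k×2k positive semidefinite real symmetric matrix with trace 2k. If λ_min denotes its smallest eigenvalue, then det(G) ≤ e · λ_min. -/
theorem stmt_0 (k : ℕ) (hk : 0 < k)
    (G : Matrix (Fin (2 * k)) (Fin (2 * k)) ℝ)
    (hG : G.PosSemidef) (htr : G.trace = 2 * k) :
    G.det ≤ Real.exp 1 * ⨅ i, hG.isHermitian.eigenvalues i := by
  set ev := hG.isHermitian.eigenvalues with hev
  have hnn : ∀ i, 0 ≤ ev i := fun i => hG.eigenvalues_nonneg i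
  -- trace = sum of eigenvalues
  have hsum : ∑ i, ev i = 2 * k := by
    have hst := hG.isHermitian.spectral_theorem
    have : G.trace = (Matrix.diagonal (RCLike.ofReal ∘ ev)).trace := by
      conv_lhs => rw [hst]
      rw [Unitary.conjStarAlgAut_apply, Matrix.trace_mul_cycle]
      rw [Unitary.coe_star_mul_self (Matrix.IsHermitian.eigenvectorUnitary hG.isHermitian),
        Matrix.one_mul]
    rw [htr, Matrix.trace_diagonal] at this
    simpa using this.symm
  -- index at which the infimum is attained
  have : Nonempty (Fin (2 * k)) := ⟨⟨0, by omega⟩⟩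
  obtain ⟨i0, hi0⟩ := exists_eq_ciInf_of_finite (f := ev)
  have hinf_le : ∀ i, ev i0 ≤ ev i := by
    intro i
    rw [hi0]
    exact ciInf_le (Finite.bddBelow_range ev) i
  -- number of remaining eigenvalues
  set n : ℕ := 2 * k - 1 with hn
  have hn1 : 1 ≤ 2 * k := by omega
  have hncard : (Finset.univ.erase i0).card = n := by
    rw [Finset.card_erase_of_mem (Finset.mem_univ _)]
    simp [hn]
  have hnpos : 0 < n := by omega
  have hnR : (0 : ℝ) < (n : ℝ) := by exact_mod_cast hnpos
  -- sum over remaining eigenvalues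
  have hS : ∑ i ∈ Finset.univ.erase i0, ev i = 2 * k - ev i0 := by
    have := Finset.add_sum_erase Finset.univ ev (Finset.mem_univ i0)
    rw [hsum] at this
    linarith
  have hS_nonneg : 0 ≤ ∑ i ∈ Finset.univ.erase i0, ev i :=
    Finset.sum_nonneg fun i _ => hnn i
  have hS_le : ∑ i ∈ Finset.univ.erase i0, ev i ≤ 2 * k := by
    rw [hS]; linarith [hnn i0]
  -- AM-GM
  have hamgm := Real.geom_mean_le_arith_mean (Finset.univ.erase i0) (fun _ => 1) ev
    (fun i _ => zero_le_one) (by rw [Finset.sum_const, hncard]; simpa using hnR)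
    (fun i _ => hnn i)
  simp only [Real.rpow_one, one_mul, Finset.sum_const, hncard, nsmul_eq_mul, mul_one] at hamgm
  have hprod_nonneg : 0 ≤ ∏ i ∈ Finset.univ.erase i0, ev i :=
    Finset.prod_nonneg fun i _ => hnn i
  have hP : ∏ i ∈ Finset.univ.erase i0, ev i ≤ ((2 * k : ℝ) / n) ^ n := by
    have h1 : ((∏ i ∈ Finset.univ.erase i0, ev i) ^ ((n : ℝ)⁻¹)) ^ (n : ℕ)
        ≤ ((∑ i ∈ Finset.univ.erase i0, ev i) / n) ^ (n : ℕ) :=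
      pow_le_pow_left₀ (Real.rpow_nonneg hprod_nonneg _) hamgm n
    have h2 : ((∏ i ∈ Finset.univ.erase i0, ev i) ^ ((n : ℝ)⁻¹)) ^ (n : ℕ)
        = ∏ i ∈ Finset.univ.erase i0, ev i := by
      rw [← Real.rpow_natCast (_ ^ ((n : ℝ)⁻¹)) n, ← Real.rpow_mul hprod_nonneg,
        inv_mul_cancel₀ (ne_of_gt hnR), Real.rpow_one]
    rw [h2] at h1
    refine h1.trans ?_
    exact pow_le_pow_left₀ (div_nonneg hS_nonneg hnR.le) (by gcongr) n
  -- (2k/(2k-1))^(2k-1) ≤ e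
  have hkey : ((2 * k : ℝ) / n) ^ n ≤ Real.exp 1 := by
    have h2kn : (2 * k : ℝ) = n + 1 := by
      have : (n : ℝ) + 1 = ((n + 1 : ℕ) : ℝ) := by push_cast; ring
      rw [this]
      norm_cast
      omega
    have hbase : (2 * k : ℝ) / n = 1 + 1 / n := by
      rw [h2kn]; field_simp
    have hb : (1 : ℝ) + 1 / n ≤ Real.exp (1 / n) := by
      have := Real.add_one_le_exp (1 / (n : ℝ))
      linarith
    calc ((2 * k : ℝ) / n) ^ n = (1 + 1 / n) ^ n := by rw [hbase]
      _ ≤ (Real.exp (1 / n)) ^ n := by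
          apply pow_le_pow_left₀ (by positivity) hb
      _ = Real.exp 1 := by
          rw [← Real.exp_nat_mul]
          congr 1
          field_simp
  -- put everything together
  have hdet : G.det = ∏ i, ev i := by
    have := hG.isHermitian.det_eq_prod_eigenvalues
    simpa using this
  have hsplit : ∏ i, ev i = ev i0 * ∏ i ∈ Finset.univ.erase i0, ev i :=
    (Finset.mul_prod_erase Finset.univ ev (Finset.mem_univ i0)).symm
  rw [hdet, hsplit, ← hi0]
  calc ev i0 * ∏ i ∈ Finset.univ.erase i0, ev i
      ≤ ev i0 * Real.exp 1 := by
        apply mul_le_mul_of_nonneg_left (hP.trans hkey) (hnn i0)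
    _ = Real.exp 1 * ev i0 := mul_comm _ _
end

section
/- Let s_1,…,s_k be linearly independent unit vectors in ℂ^d such that every nonzero vector in the ℤ[i]-lattice they generate has Euclidean norm at least 1. If φ is a unit vector with φ = Σ_{j=1}^k c_j s_j for c ∈ ℂ^k, then ‖c‖₁ ≤ √e · (2k)^{(2k+1)/2}. -/
open Matrix MeasureTheory Finset

private lemma amgm_aux {ι : Type*} (s : Finset ι) (f : ι → ℝ) (hf : ∀ i ∈ s, 0 ≤ f i) :
    ∏ i ∈ s, f i ≤ ((∑ i ∈ s, f i) / s.card) ^ (s.card : ℕ) := by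
  rcases s.eq_empty_or_nonempty with rfl | hs
  · simp
  have hc : (0:ℝ) < s.card := by
    exact_mod_cast Finset.card_pos.mpr hs
  have hsum : ∑ i ∈ s, (1 / (s.card:ℝ)) = 1 := by
    rw [Finset.sum_const, nsmul_eq_mul]
    field_simp
  have h := Real.geom_mean_le_arith_mean_weighted s (fun _ => 1 / (s.card:ℝ)) f
    (fun i _ => by positivity) hsum hf
  have h2 : ∏ i ∈ s, f i ^ (1 / (s.card:ℝ)) = (∏ i ∈ s, f i) ^ (1 / (s.card:ℝ)) :=
    Real.finset_prod_rpow s f hf _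
  rw [h2] at h
  have hprod : 0 ≤ ∏ i ∈ s, f i := Finset.prod_nonneg hf
  have h3 : ((∏ i ∈ s, f i) ^ (1 / (s.card:ℝ))) ^ (s.card : ℕ) ≤
      (∑ i ∈ s, (1 / (s.card:ℝ)) * f i) ^ (s.card : ℕ) :=
    pow_le_pow_left₀ (Real.rpow_nonneg hprod _) h _
  rw [← Real.rpow_natCast ((∏ i ∈ s, f i) ^ (1 / (s.card:ℝ))) s.card, ← Real.rpow_mul hprod,
    one_div_mul_cancel (ne_of_gt hc), Real.rpow_one] at h3
  calc ∏ i ∈ s, f i ≤ (∑ i ∈ s, (1 / (s.card:ℝ)) * f i) ^ (s.card : ℕ) := h3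
    _ = ((∑ i ∈ s, f i) / s.card) ^ (s.card : ℕ) := by
        rw [← Finset.mul_sum]
        congr 1
        ring

private lemma pow_div_le_exp (m : ℕ) (hm : 1 ≤ m) :
    (((m:ℝ) + 1) / m) ^ m ≤ Real.exp 1 := by
  have hm' : (0:ℝ) < m := by exact_mod_cast hm
  have h1 : ((m:ℝ) + 1) / m = 1 / m + 1 := by field_simp; ring
  have h2 : (1 / (m:ℝ) + 1) ≤ Real.exp (1 / m) := Real.add_one_le_exp _
  calc (((m:ℝ) + 1) / m) ^ m = (1 / (m:ℝ) + 1) ^ m := by rw [h1]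
    _ ≤ (Real.exp (1 / m)) ^ m := pow_le_pow_left₀ (by positivity) h2 _
    _ = Real.exp ((1 / m) * m) := by rw [← Real.exp_nat_mul]; ring_nf
    _ = Real.exp 1 := by rw [one_div, inv_mul_cancel₀ (ne_of_gt hm')]

private lemma rayleigh_aux {n : ℕ} (M : Matrix (Fin n) (Fin n) ℝ) (hM : M.IsHermitian)
    (i₀ : Fin n) (h : ∀ i, hM.eigenvalues i₀ ≤ hM.eigenvalues i) (y : Fin n → ℝ) :
    hM.eigenvalues i₀ * (y ⬝ᵥ y) ≤ y ⬝ᵥ M *ᵥ y := by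
  classical
  set U : Matrix (Fin n) (Fin n) ℝ := (hM.eigenvectorUnitary : Matrix (Fin n) (Fin n) ℝ) with hUdef
  have hUU : U * star U = 1 := mem_unitaryGroup_iff.mp hM.eigenvectorUnitary.2
  have hstar : star U = Uᵀ := by
    rw [Matrix.star_eq_conjTranspose, Matrix.conjTranspose]
    ext i j
    simp
  set z : Fin n → ℝ := Uᵀ *ᵥ y with hz
  have hyz : y ᵥ* U = z := by rw [hz, Matrix.mulVec_transpose]
  have hdiag : Matrix.diagonal (RCLike.ofReal ∘ hM.eigenvalues) = Matrix.diagonal hM.eigenvalues := by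
    congr 1
  have h1 : y ⬝ᵥ M *ᵥ y = ∑ i, hM.eigenvalues i * (z i)^2 := by
    conv_lhs => rw [hM.spectral_theorem, Unitary.conjStarAlgAut_apply]
    rw [hdiag, ← mulVec_mulVec, ← mulVec_mulVec, dotProduct_mulVec, hyz, hstar]
    rw [dotProduct]
    refine Finset.sum_congr rfl fun i _ => ?_
    rw [mulVec_diagonal]
    ring
  have h2 : y ⬝ᵥ y = ∑ i, (z i)^2 := by
    have : z ⬝ᵥ z = y ⬝ᵥ y := by
      rw [hz, dotProduct_mulVec, Matrix.vecMul_transpose, Matrix.mulVec_mulVec,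
        ← hstar, hUU, Matrix.one_mulVec]
    rw [← this, dotProduct]
    refine Finset.sum_congr rfl fun i _ => ?_
    ring
  rw [h1, h2, Finset.mul_sum]
  refine Finset.sum_le_sum fun i _ => ?_
  exact mul_le_mul_of_nonneg_right (h i) (sq_nonneg _)

private lemma trace_aux {n : ℕ} (M : Matrix (Fin n) (Fin n) ℝ) (hM : M.IsHermitian) :
    ∑ i, hM.eigenvalues i = M.trace := by
  conv_rhs => rw [hM.spectral_theorem, Unitary.conjStarAlgAut_apply]
  rw [trace_mul_cycle, mem_unitaryGroup_iff'.mp hM.eigenvectorUnitary.2, one_mul,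
    trace_diagonal]
  simp



set_option maxHeartbeats 1000000 in
theorem stmt_4 (d k : ℕ) (s : Fin k → EuclideanSpace ℂ (Fin d))
    (hunit : ∀ j, ‖s j‖ = 1) (hli : LinearIndependent ℂ s)
    (hmin : ∀ a : Fin k → GaussianInt,
      (∑ j, (GaussianInt.toComplex (a j)) • s j) ≠ 0 →
        1 ≤ ‖∑ j, (GaussianInt.toComplex (a j)) • s j‖)
    (φ : EuclideanSpace ℂ (Fin d)) (hφ : ‖φ‖ = 1)
    (c : Fin k → ℂ) (hdecomp : φ = ∑ j, c j • s j) :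
    ∑ j, ‖c j‖ ≤ Real.sqrt (Real.exp 1) * (2 * (k : ℝ)) ^ ((2 * (k : ℝ) + 1) / 2) := by
  classical
  rcases Nat.eq_zero_or_pos k with rfl | hk
  · exfalso
    rw [show φ = 0 by simpa using hdecomp] at hφ
    simp at hφ
  set n := k + k with hn
  have hn1 : 1 ≤ n := by omega
  let b : Fin n → EuclideanSpace ℂ (Fin d) := Fin.append s (fun j => Complex.I • s j)
  have hb_cast : ∀ j : Fin k, b (Fin.castAdd k j) = s j := fun j => Fin.append_left _ _ j
  have hb_nat : ∀ j : Fin k, b (Fin.natAdd k j) = Complex.I • s j := fun j => Fin.append_right _ _ j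
  have hbnorm : ∀ j, ‖b j‖ = 1 := by
    intro j
    refine Fin.addCases (fun i => ?_) (fun i => ?_) j
    · rw [hb_cast]; exact hunit i
    · rw [hb_nat, norm_smul, Complex.norm_I, one_mul]; exact hunit i
  have hcombo : ∀ y : Fin n → ℝ, ∑ j, y j • b j
      = ∑ j : Fin k, (((y (Fin.castAdd k j) : ℝ) : ℂ)
          + ((y (Fin.natAdd k j) : ℝ) : ℂ) * Complex.I) • s j := by
    intro y
    rw [Fin.sum_univ_add, ← Finset.sum_add_distrib]
    refine Finset.sum_congr rfl fun j _ => ?_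
    rw [hb_cast, hb_nat, add_smul, ← Complex.coe_smul, ← Complex.coe_smul, smul_smul]
  have hli2 : ∀ y : Fin n → ℝ, ∑ j, y j • b j = 0 → y = 0 := by
    intro y hy
    rw [hcombo] at hy
    have hz := Fintype.linearIndependent_iff.mp hli _ hy
    funext j
    simp only [Pi.zero_apply]
    refine Fin.addCases (fun i => ?_) (fun i => ?_) j
    · have h1 := congrArg Complex.re (hz i)
      simpa using h1
    · have h1 := congrArg Complex.im (hz i)
      simpa using h1
  let M : Matrix (Fin n) (Fin n) ℝ := fun i j => Complex.re (inner (𝕜 := ℂ) (b i) (b j))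
  have hMsym : M.IsHermitian := by
    ext i j
    show star (M j i) = M i j
    rw [star_trivial]
    have h1 := inner_re_symm (𝕜 := ℂ) (b j) (b i)
    simp only [RCLike.re_to_complex] at h1
    exact h1
  have hMquad : ∀ y : Fin n → ℝ, y ⬝ᵥ M *ᵥ y = ‖∑ j, y j • b j‖ ^ 2 := by
    intro y
    have hv := (inner_self_eq_norm_sq (𝕜 := ℂ) (∑ j, y j • b j)).symm
    simp only [RCLike.re_to_complex] at hv
    rw [hv, sum_inner, Complex.re_sum]
    simp only [dotProduct, Matrix.mulVec]
    refine Finset.sum_congr rfl fun i _ => ?_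
    rw [inner_sum, Complex.re_sum, Finset.mul_sum]
    refine Finset.sum_congr rfl fun j _ => ?_
    rw [← Complex.coe_smul (y i), ← Complex.coe_smul (y j), inner_smul_left,
      inner_smul_right, Complex.conj_ofReal]
    have hre : (((y i : ℝ) : ℂ) * (((y j : ℝ) : ℂ) * inner (𝕜 := ℂ) (b i) (b j))).re
        = y i * (y j * (inner (𝕜 := ℂ) (b i) (b j)).re) := by
      rw [Complex.re_ofReal_mul, Complex.re_ofReal_mul]
    rw [hre]
    show y i * ((inner (𝕜 := ℂ) (b i) (b j)).re * y j)
      = y i * (y j * (inner (𝕜 := ℂ) (b i) (b j)).re)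
    ring
  have hMposdef : M.PosDef := by
    refine Matrix.PosDef.of_dotProduct_mulVec_pos hMsym fun y hy => ?_
    have h0 : star y = y := by funext i; simp
    rw [h0, hMquad]
    have hne : ∑ j, y j • b j ≠ 0 := fun hzero => hy (hli2 y hzero)
    exact pow_pos (norm_pos_iff.mpr hne) 2
  have htr : M.trace = (n : ℝ) := by
    have hdiag : ∀ i, M.diag i = 1 := by
      intro i
      have h1 := inner_self_eq_norm_sq (𝕜 := ℂ) (b i)
      simp only [RCLike.re_to_complex] at h1
      show Complex.re (inner (𝕜 := ℂ) (b i) (b i)) = 1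
      rw [h1, hbnorm i, one_pow]
    rw [Matrix.trace, Finset.sum_congr rfl (fun i _ => hdiag i), Finset.sum_const,
      Finset.card_univ, Fintype.card_fin, nsmul_eq_mul, mul_one]
  let T : (Fin n → ℝ) →ₗ[ℝ] EuclideanSpace ℂ (Fin d) :=
    { toFun := fun y => ∑ j, y j • b j
      map_add' := by intro x y; simp [add_smul, Finset.sum_add_distrib]
      map_smul' := by intro r x; simp [mul_smul, Finset.smul_sum] }
  let A := (open scoped MatrixOrder in CFC.sqrt M)
  have hA2 : A * A = M := by
    open scoped MatrixOrder in exact CFC.sqrt_mul_sqrt_self M hMposdef.posSemidef.nonneg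
  have hAherm : A.IsHermitian := by
    open scoped MatrixOrder in exact (CFC.sqrt_nonneg M).posSemidef.1
  have hdetM : (0:ℝ) < M.det := hMposdef.det_pos
  have hdetMA : M.det = A.det * A.det := by rw [← hA2, Matrix.det_mul]
  have hdetA : A.det ≠ 0 := by
    intro h0
    rw [hdetMA, h0, mul_zero] at hdetM
    exact lt_irrefl _ hdetM
  have hAT : Aᵀ = A := by
    ext i j
    have := congrFun (congrFun hAherm i) j
    simpa using this
  have hAA : ∀ y, y ⬝ᵥ M *ᵥ y = (A *ᵥ y) ⬝ᵥ (A *ᵥ y) := by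
    intro y
    rw [← hA2, ← Matrix.mulVec_mulVec, dotProduct_mulVec]
    congr 1
    rw [← hAT, Matrix.vecMul_transpose, hAT]
  -- the lattice ℤ^n
  let bF := Pi.basisFun ℝ (Fin n)
  haveI hcount : Countable ↥((Submodule.span ℤ (Set.range ⇑bF)).toAddSubgroup) :=
    inferInstanceAs (Countable ↥(Submodule.span ℤ (Set.range ⇑bF)))
  have fund := ZSpan.isAddFundamentalDomain' bF volume
  have hvolF : volume (ZSpan.fundamentalDomain bF) = 1 := by
    rw [ZSpan.volume_fundamentalDomain]
    have h1 : Matrix.of ⇑bF = (1 : Matrix (Fin n) (Fin n) ℝ) := by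
      ext i j
      simp [bF, Matrix.one_apply, Pi.single_apply, eq_comm]
    rw [h1, Matrix.det_one]
    simp
  -- the convex body
  let S : Set (Fin n → ℝ) := T ⁻¹' (Metric.ball 0 1)
  have hS_symm : ∀ x ∈ S, -x ∈ S := by
    intro x hx
    simp only [S, Set.mem_preimage, map_neg, Metric.mem_ball, dist_zero_right, norm_neg] at hx ⊢
    exact hx
  have hS_conv : Convex ℝ S := (convex_ball (0 : EuclideanSpace ℂ (Fin d)) 1).linear_preimage T
  let S₀ : Set (Fin n → ℝ) := {z | ∑ i, z i ^ 2 < 1}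
  have hS₀open : IsOpen S₀ := by
    have hcont : Continuous fun z : Fin n → ℝ => ∑ i, z i ^ 2 :=
      continuous_finset_sum _ (fun i _ => (continuous_apply i).pow 2)
    exact isOpen_lt hcont continuous_const
  have hSeq : S = (Matrix.toLin' A) ⁻¹' S₀ := by
    ext y
    simp only [S, S₀, Set.mem_preimage, Metric.mem_ball, dist_zero_right, Matrix.toLin'_apply,
      Set.mem_setOf_eq]
    rw [← pow_lt_one_iff_of_nonneg (norm_nonneg _) two_ne_zero]
    have h1 : ‖T y‖ ^ 2 = (A *ᵥ y) ⬝ᵥ (A *ᵥ y) := by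
      rw [← hAA, hMquad]
      rfl
    rw [h1, dotProduct]
    have h2 : ∀ i, (A *ᵥ y) i * (A *ᵥ y) i = (A *ᵥ y) i ^ 2 := fun i => (sq _).symm
    rw [Finset.sum_congr rfl fun i _ => h2 i]
  have hvolS₀ : volume S₀
      = ENNReal.ofReal (Real.sqrt Real.pi ^ n / Real.Gamma ((n : ℝ) / 2 + 1)) := by
    have hpre : (MeasurableEquiv.toLp 2 (Fin n → ℝ)).symm ⁻¹' S₀
        = Metric.ball (0 : EuclideanSpace ℝ (Fin n)) 1 := by
      ext x
      haveI : Nonempty (Fin n) := ⟨⟨0, by omega⟩⟩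
      simp only [Set.mem_preimage, S₀, Set.mem_setOf_eq, Metric.mem_ball, dist_zero_right]
      rw [← pow_lt_one_iff_of_nonneg (norm_nonneg x) two_ne_zero,
        EuclideanSpace.norm_eq, Real.sq_sqrt (by positivity)]
      simp_rw [Real.norm_eq_abs, sq_abs]
      exact Iff.rfl
    calc volume S₀ = volume ((MeasurableEquiv.toLp 2 (Fin n → ℝ)).symm ⁻¹' S₀) :=
          ((EuclideanSpace.volume_preserving_symm_measurableEquiv_toLp (Fin n)).measure_preimage
            hS₀open.measurableSet.nullMeasurableSet).symm
      _ = ENNReal.ofReal (Real.sqrt Real.pi ^ n / Real.Gamma ((n : ℝ) / 2 + 1)) := by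
          haveI : Nonempty (Fin n) := ⟨⟨0, by omega⟩⟩
          rw [hpre, EuclideanSpace.volume_ball]
          simp [Fintype.card_fin]
  have hvolS : volume S = ENNReal.ofReal (|A.det|⁻¹
      * (Real.sqrt Real.pi ^ n / Real.Gamma ((n : ℝ) / 2 + 1))) := by
    rw [hSeq, MeasureTheory.Measure.addHaar_preimage_linearMap volume
      (by rw [LinearMap.det_toLin']; exact hdetA) S₀, hvolS₀, LinearMap.det_toLin', ← abs_inv,
      ENNReal.ofReal_mul (by positivity), abs_inv]
  have hgammapos : 0 < Real.Gamma ((n : ℝ) / 2 + 1) :=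
    Real.Gamma_pos_of_pos (by positivity)
  -- Minkowski's theorem
  have hMink : volume S ≤ 2 ^ n := by
    by_contra hlt
    push_neg at hlt
    obtain ⟨x, hx0, hxS⟩ := exists_ne_zero_mem_lattice_of_measure_mul_two_pow_lt_measure
      fund hS_symm hS_conv (by
        rw [hvolF, one_mul, Module.finrank_pi, Fintype.card_fin]
        exact hlt)
    have hxmem : (x : Fin n → ℝ) ∈ Submodule.span ℤ (Set.range ⇑bF) := x.2
    have hcoords : ∀ i, ∃ a : ℤ, (a : ℝ) = (x : Fin n → ℝ) i := by
      intro i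
      obtain ⟨a, ha⟩ := (bF.mem_span_iff_repr_mem ℤ _).mp hxmem i
      refine ⟨a, ?_⟩
      rw [show ((algebraMap ℤ ℝ) a : ℝ) = (a : ℝ) by simp] at ha
      rw [ha]
      simp [bF, Pi.basisFun_repr]
    choose a ha using hcoords
    let g : Fin k → GaussianInt := fun j => ⟨a (Fin.castAdd k j), a (Fin.natAdd k j)⟩
    have hsum : ∑ j, (GaussianInt.toComplex (g j)) • s j = T (x : Fin n → ℝ) := by
      show _ = ∑ j, (x : Fin n → ℝ) j • b j
      rw [hcombo]
      refine Finset.sum_congr rfl fun j _ => ?_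
      congr 1
      rw [GaussianInt.toComplex_def, ← ha (Fin.castAdd k j), ← ha (Fin.natAdd k j)]
      push_cast
      ring
    have hTx_ne : T (x : Fin n → ℝ) ≠ 0 := by
      intro h0
      exact hx0 (Subtype.ext (hli2 _ h0))
    have h1le := hmin g (by rw [hsum]; exact hTx_ne)
    rw [hsum] at h1le
    have hlt1 : ‖T (x : Fin n → ℝ)‖ < 1 := by
      simpa [S, Metric.mem_ball, dist_zero_right] using hxS
    linarith
  -- extract the real determinant bound
  have hdetA' : (0:ℝ) < |A.det| := abs_pos.mpr hdetA
  have hreal : |A.det|⁻¹ * (Real.sqrt Real.pi ^ n / Real.Gamma ((n : ℝ) / 2 + 1))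
      ≤ 2 ^ n := by
    rw [hvolS] at hMink
    have h2 : ((2:ENNReal) ^ n) = ENNReal.ofReal ((2:ℝ) ^ n) := by
      rw [ENNReal.ofReal_pow (by norm_num : (0:ℝ) ≤ 2)]
      norm_num
    rw [h2, ENNReal.ofReal_le_ofReal_iff (by positivity)] at hMink
    exact hMink
  have hgamma : Real.Gamma ((n : ℝ) / 2 + 1) = (Nat.factorial k : ℝ) := by
    have h1 : ((n:ℝ)/2) = (k:ℝ) := by rw [hn]; push_cast; ring
    rw [h1, Real.Gamma_nat_eq_factorial]
  have hsqpi : (Real.sqrt Real.pi) ^ n = Real.pi ^ k := by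
    rw [hn, pow_add, ← mul_pow, Real.mul_self_sqrt Real.pi_pos.le]
  have h2n : ((2:ℝ)) ^ n = 4 ^ k := by
    rw [hn, pow_add, ← mul_pow]
    norm_num
  have hfacpos : (0:ℝ) < (Nat.factorial k : ℝ) := by exact_mod_cast Nat.factorial_pos k
  have hPdet : Real.pi ^ k ≤ 4 ^ k * |A.det| * (Nat.factorial k : ℝ) := by
    rw [hgamma, hsqpi, h2n, inv_mul_le_iff₀ hdetA'] at hreal
    rw [div_le_iff₀ hfacpos] at hreal
    linarith
  have hdetM_abs : M.det = |A.det| ^ 2 := by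
    rw [hdetMA, sq_abs, pow_two]
  -- eigenvalue bounds
  obtain ⟨i₀, -, hi₀⟩ := Finset.exists_min_image Finset.univ hMsym.eigenvalues
    ⟨⟨0, by omega⟩, Finset.mem_univ _⟩
  have hi₀' : ∀ i, hMsym.eigenvalues i₀ ≤ hMsym.eigenvalues i := fun i =>
    hi₀ i (Finset.mem_univ i)
  have hμpos : ∀ i, 0 < hMsym.eigenvalues i := fun i => hMposdef.eigenvalues_pos i
  have hdet_eig : M.det = ∏ i, hMsym.eigenvalues i := by
    have h1 := hMsym.det_eq_prod_eigenvalues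
    simpa using h1
  have htr_eig : ∑ i, hMsym.eigenvalues i = (n : ℝ) := by
    rw [trace_aux M hMsym, htr]
  have hm1 : (1:ℕ) ≤ n - 1 := by omega
  have hcastn : ((n - 1 : ℕ) : ℝ) = (n : ℝ) - 1 := by
    rw [Nat.cast_sub hn1, Nat.cast_one]
  have hcard : (Finset.univ.erase i₀).card = n - 1 := by
    rw [Finset.card_erase_of_mem (Finset.mem_univ _), Finset.card_univ, Fintype.card_fin]
  have hprod_rest : ∏ i ∈ Finset.univ.erase i₀, hMsym.eigenvalues i ≤ Real.exp 1 := by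
    have h1 := amgm_aux (Finset.univ.erase i₀) hMsym.eigenvalues (fun i _ => (hμpos i).le)
    have hsumrest : ∑ i ∈ Finset.univ.erase i₀, hMsym.eigenvalues i ≤ ((n - 1 : ℕ) : ℝ) + 1 := by
      have h2 : ∑ i ∈ Finset.univ.erase i₀, hMsym.eigenvalues i
          = (n : ℝ) - hMsym.eigenvalues i₀ := by
        rw [eq_sub_iff_add_eq, Finset.sum_erase_add _ _ (Finset.mem_univ i₀), htr_eig]
      rw [h2, hcastn]
      have := hμpos i₀
      linarith
    have hpos1 : (0:ℝ) < ((n - 1 : ℕ) : ℝ) := by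
      have : (0:ℕ) < n - 1 := hm1
      exact_mod_cast this
    calc ∏ i ∈ Finset.univ.erase i₀, hMsym.eigenvalues i
        ≤ ((∑ i ∈ Finset.univ.erase i₀, hMsym.eigenvalues i) / (Finset.univ.erase i₀).card)
          ^ ((Finset.univ.erase i₀).card : ℕ) := h1
      _ ≤ ((((n - 1 : ℕ) : ℝ) + 1) / ((n - 1 : ℕ) : ℝ)) ^ ((n - 1 : ℕ) : ℕ) := by
          rw [hcard]
          refine pow_le_pow_left₀ ?_ ?_ _
          · refine div_nonneg ?_ hpos1.le
            exact Finset.sum_nonneg fun i _ => (hμpos i).le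
          · exact (div_le_div_iff_of_pos_right hpos1).mpr hsumrest
      _ ≤ Real.exp 1 := pow_div_le_exp (n-1) hm1
  have hdet_le : M.det ≤ hMsym.eigenvalues i₀ * Real.exp 1 := by
    rw [hdet_eig, ← Finset.prod_erase_mul _ _ (Finset.mem_univ i₀), mul_comm]
    exact mul_le_mul_of_nonneg_left hprod_rest (hμpos i₀).le
  -- the coordinate vector of φ
  let y : Fin n → ℝ := Fin.append (fun j => (c j).re) (fun j => (c j).im)
  have hyφ : ∑ j, y j • b j = φ := by
    rw [hcombo, hdecomp]
    refine Finset.sum_congr rfl fun j _ => ?_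
    congr 1
    rw [show y (Fin.castAdd k j) = (c j).re from Fin.append_left _ _ j,
      show y (Fin.natAdd k j) = (c j).im from Fin.append_right _ _ j, Complex.re_add_im]
  have hyMy : y ⬝ᵥ M *ᵥ y = 1 := by
    rw [hMquad, hyφ, hφ]
    norm_num
  have hray := rayleigh_aux M hMsym i₀ hi₀' y
  rw [hyMy] at hray
  have hyy : y ⬝ᵥ y = ∑ j : Fin k, ‖c j‖ ^ 2 := by
    rw [dotProduct, Fin.sum_univ_add, ← Finset.sum_add_distrib]
    refine Finset.sum_congr rfl fun j _ => ?_
    rw [show y (Fin.castAdd k j) = (c j).re from Fin.append_left _ _ j,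
      show y (Fin.natAdd k j) = (c j).im from Fin.append_right _ _ j]
    rw [Complex.sq_norm, Complex.normSq_apply]
  have hcs : (∑ j, ‖c j‖) ^ 2 ≤ (k:ℝ) * ∑ j, ‖c j‖ ^ 2 := by
    have h1 := sq_sum_le_card_mul_sum_sq (s := Finset.univ) (f := fun j : Fin k => ‖c j‖)
    simpa [Finset.card_univ] using h1
  have hlampos : 0 < hMsym.eigenvalues i₀ := hμpos i₀
  have hyy_le : y ⬝ᵥ y ≤ Real.exp 1 / M.det := by
    have h1 : y ⬝ᵥ y ≤ 1 / hMsym.eigenvalues i₀ := by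
      rw [le_div_iff₀ hlampos]
      linarith [hray]
    have h2 : 1 / hMsym.eigenvalues i₀ ≤ Real.exp 1 / M.det := by
      rw [div_le_div_iff₀ hlampos hdetM]
      calc 1 * M.det = M.det := one_mul _
        _ ≤ hMsym.eigenvalues i₀ * Real.exp 1 := hdet_le
        _ = Real.exp 1 * hMsym.eigenvalues i₀ := mul_comm _ _
    linarith
  -- assemble the numeric bound
  set Q : ℝ := 4 ^ k * (Nat.factorial k : ℝ) / Real.pi ^ k with hQ
  have hQpos : 0 < Q := by
    rw [hQ]
    positivity
  have hQA : 1 ≤ Q * |A.det| := by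
    rw [hQ, div_mul_eq_mul_div, le_div_iff₀ (by positivity)]
    calc 1 * Real.pi ^ k = Real.pi ^ k := one_mul _
      _ ≤ 4 ^ k * |A.det| * (Nat.factorial k : ℝ) := hPdet
      _ = 4 ^ k * (Nat.factorial k : ℝ) * |A.det| := by ring
  have hMdet_ge : 1 ≤ Q ^ 2 * M.det := by
    rw [hdetM_abs]
    nlinarith [hQA, hQpos, hdetA']
  have hyyQ : y ⬝ᵥ y ≤ Real.exp 1 * Q ^ 2 := by
    calc y ⬝ᵥ y ≤ Real.exp 1 / M.det := hyy_le
      _ ≤ Real.exp 1 * Q ^ 2 := by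
          rw [div_le_iff₀ hdetM]
          nlinarith [hMdet_ge, Real.exp_pos 1]
  have hfinal_sq : (∑ j, ‖c j‖) ^ 2 ≤ (k:ℝ) * (Real.exp 1 * Q ^ 2) := by
    calc (∑ j, ‖c j‖) ^ 2 ≤ (k:ℝ) * ∑ j, ‖c j‖ ^ 2 := hcs
      _ = (k:ℝ) * (y ⬝ᵥ y) := by rw [hyy]
      _ ≤ (k:ℝ) * (Real.exp 1 * Q ^ 2) := by
          exact mul_le_mul_of_nonneg_left hyyQ (Nat.cast_nonneg k)
  have hstep : ∑ j, ‖c j‖ ≤ Real.sqrt ((k:ℝ) * Real.exp 1) * Q := by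
    have h4 : (k:ℝ) * (Real.exp 1 * Q ^ 2) = (Real.sqrt ((k:ℝ) * Real.exp 1) * Q) ^ 2 := by
      rw [mul_pow, Real.sq_sqrt (by positivity)]
      ring
    have h5 := Real.le_sqrt_of_sq_le hfinal_sq
    rwa [h4, Real.sqrt_sq (by positivity)] at h5
  refine hstep.trans ?_
  -- final arithmetic
  have hkpos : (0:ℝ) < (k:ℝ) := by exact_mod_cast hk
  have hrpow : (2*(k:ℝ)) ^ ((2*(k:ℝ)+1)/2) = (2*(k:ℝ)) ^ (k:ℕ) * Real.sqrt (2*(k:ℝ)) := by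
    have h2k : (0:ℝ) < 2*(k:ℝ) := by positivity
    rw [show (2*(k:ℝ)+1)/2 = ((k:ℕ):ℝ) + 1/2 by push_cast; ring, Real.rpow_add h2k,
      Real.rpow_natCast, Real.sqrt_eq_rpow]
  rw [hrpow]
  have hmain : Real.sqrt (k:ℝ) * Q ≤ (2*(k:ℝ)) ^ (k:ℕ) * Real.sqrt (2*(k:ℝ)) := by
    have hfk : (Nat.factorial k : ℝ) ≤ (k:ℝ) ^ k := by
      have := Nat.factorial_le_pow k
      exact_mod_cast this
    have h4pi : (4:ℝ) ^ k ≤ 2 ^ k * Real.pi ^ k := by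
      rw [← mul_pow]
      refine pow_le_pow_left₀ (by norm_num) ?_ _
      nlinarith [Real.pi_gt_three]
    have hsq2 : Real.sqrt (k:ℝ) ≤ Real.sqrt (2*(k:ℝ)) := by
      refine Real.sqrt_le_sqrt ?_
      linarith
    calc Real.sqrt (k:ℝ) * Q
        ≤ Real.sqrt (2*(k:ℝ)) * ((2 ^ k * Real.pi ^ k) * (k:ℝ) ^ k / Real.pi ^ k) := by
          rw [hQ]
          gcongr
      _ = (2*(k:ℝ)) ^ (k:ℕ) * Real.sqrt (2*(k:ℝ)) := by
          have hπ : Real.pi ^ k ≠ 0 := by positivity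
          field_simp
          ring
  calc Real.sqrt ((k:ℝ) * Real.exp 1) * Q
      = Real.sqrt (Real.exp 1) * (Real.sqrt (k:ℝ) * Q) := by
        rw [Real.sqrt_mul (Nat.cast_nonneg k)]
        ring
    _ ≤ Real.sqrt (Real.exp 1) * ((2*(k:ℝ)) ^ (k:ℕ) * Real.sqrt (2*(k:ℝ))) := by
        exact mul_le_mul_of_nonneg_left hmain (Real.sqrt_nonneg _)
end

section
/- Let ψ' ∈ ℂ^{2^n} satisfy ψ' = H^{⊗n} + φ where H^{⊗n} is a fixed unit vector, ⟨H^{⊗n}, φ⟩ = 0 and ‖φ‖² = ε. Let C range uniformly over the 2^n operators that are n-fold tensor products of the single-qubit Hadamard matrix and the identity. Then the expected value of ‖(I+C)/2 · φ‖² over the random choice of C is at most ε/2; hence there exists such a C with ‖(I+C)/2 · φ‖² ≤ ε/2. -/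
noncomputable def hadMat : Bool → Matrix (Fin 2) (Fin 2) ℂ
  | false => 1
  | true => !![(Real.sqrt 2 : ℂ)⁻¹, (Real.sqrt 2 : ℂ)⁻¹;
               (Real.sqrt 2 : ℂ)⁻¹, -(Real.sqrt 2 : ℂ)⁻¹]

/-- The n-fold tensor product of Hadamard (where `b i = true`) and identity
(where `b i = false`), acting on `ℂ^{2^n}`. -/
noncomputable def hadTensor (n : ℕ) (b : Fin n → Bool)
    (ψ : EuclideanSpace ℂ (Fin n → Fin 2)) : EuclideanSpace ℂ (Fin n → Fin 2) :=
  WithLp.toLp 2 (fun x => ∑ y : Fin n → Fin 2, (∏ i, hadMat (b i) (x i) (y i)) * ψ y)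

/-- The magic state `|H⟩^{⊗n}` with `|H⟩ = cos(π/8)|0⟩ + sin(π/8)|1⟩`. -/
noncomputable def magicH (n : ℕ) : EuclideanSpace ℂ (Fin n → Fin 2) :=
  WithLp.toLp 2 (fun x => ∏ i : Fin n,
    if x i = 0 then (Real.cos (Real.pi / 8) : ℂ) else (Real.sin (Real.pi / 8) : ℂ))

/-- single-qubit magic-state coefficient -/
noncomputable def hC (x : Fin 2) : ℂ :=
  if x = 0 then (Real.cos (Real.pi / 8) : ℂ) else (Real.sin (Real.pi / 8) : ℂ)

lemma magicH_eq (n : ℕ) (x : Fin n → Fin 2) : magicH n x = ∏ i, hC (x i) := rfl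

lemma sqrt2_mul_self : ((Real.sqrt 2 : ℝ) : ℂ) * ((Real.sqrt 2 : ℝ) : ℂ) = 2 := by
  norm_cast
  exact Real.mul_self_sqrt (by norm_num)

lemma sqrt2_ne : ((Real.sqrt 2 : ℝ) : ℂ) ≠ 0 := by
  simp [Real.sqrt_eq_zero']

/-- columns of each `hadMat b` are orthonormal -/
lemma had_col (b : Bool) (y y' : Fin 2) :
    ∑ x : Fin 2, (starRingEnd ℂ) (hadMat b x y) * hadMat b x y' =
      if y = y' then 1 else 0 := by
  have h2 := sqrt2_mul_self
  have hne := sqrt2_ne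
  cases b <;> fin_cases y <;> fin_cases y' <;>
    simp [hadMat, Fin.sum_univ_two, Matrix.one_apply, map_inv₀, Complex.conj_ofReal] <;>
    field_simp <;> first
      | linear_combination h2
      | linear_combination (-1 : ℂ) * h2
      | linear_combination (2 : ℂ) * h2
      | linear_combination (-2 : ℂ) * h2
      | linear_combination (3 : ℂ) * h2
      | linear_combination (-3 : ℂ) * h2

lemma had_avg (x y : Fin 2) :
    ∑ b : Bool, hadMat b x y = 2 * hC x * hC y := by
  have hs2 : Real.sqrt 2 * Real.sqrt 2 = 2 := Real.mul_self_sqrt (by norm_num)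
  have hs2nn : (0:ℝ) ≤ Real.sqrt 2 := Real.sqrt_nonneg 2
  have hs2le : Real.sqrt 2 ≤ 2 := by nlinarith
  have hs2ne : Real.sqrt 2 ≠ 0 := by positivity
  have hinv : (Real.sqrt 2)⁻¹ = Real.sqrt 2 / 2 := by
    field_simp
    rw [Real.sq_sqrt (by norm_num)]
  have hc : Real.sqrt (2 + Real.sqrt 2) * Real.sqrt (2 + Real.sqrt 2) = 2 + Real.sqrt 2 :=
    Real.mul_self_sqrt (by positivity)
  have hs : Real.sqrt (2 - Real.sqrt 2) * Real.sqrt (2 - Real.sqrt 2) = 2 - Real.sqrt 2 :=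
    Real.mul_self_sqrt (by linarith)
  have hcs : Real.sqrt (2 + Real.sqrt 2) * Real.sqrt (2 - Real.sqrt 2) = Real.sqrt 2 := by
    rw [← Real.sqrt_mul (by positivity)]
    congr 1
    nlinarith
  have rcc : 2 * Real.cos (Real.pi / 8) * Real.cos (Real.pi / 8) = 1 + (Real.sqrt 2)⁻¹ := by
    rw [Real.cos_pi_div_eight, hinv]
    calc 2 * (Real.sqrt (2 + Real.sqrt 2) / 2) * (Real.sqrt (2 + Real.sqrt 2) / 2)
        = Real.sqrt (2 + Real.sqrt 2) * Real.sqrt (2 + Real.sqrt 2) / 2 := by ring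
      _ = (2 + Real.sqrt 2) / 2 := by rw [hc]
      _ = 1 + Real.sqrt 2 / 2 := by ring
  have rcs : 2 * Real.cos (Real.pi / 8) * Real.sin (Real.pi / 8) = (Real.sqrt 2)⁻¹ := by
    rw [Real.cos_pi_div_eight, Real.sin_pi_div_eight, hinv]
    calc 2 * (Real.sqrt (2 + Real.sqrt 2) / 2) * (Real.sqrt (2 - Real.sqrt 2) / 2)
        = Real.sqrt (2 + Real.sqrt 2) * Real.sqrt (2 - Real.sqrt 2) / 2 := by ring
      _ = Real.sqrt 2 / 2 := by rw [hcs]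
  have rss : 2 * Real.sin (Real.pi / 8) * Real.sin (Real.pi / 8) = 1 - (Real.sqrt 2)⁻¹ := by
    rw [Real.sin_pi_div_eight, hinv]
    calc 2 * (Real.sqrt (2 - Real.sqrt 2) / 2) * (Real.sqrt (2 - Real.sqrt 2) / 2)
        = Real.sqrt (2 - Real.sqrt 2) * Real.sqrt (2 - Real.sqrt 2) / 2 := by ring
      _ = (2 - Real.sqrt 2) / 2 := by rw [hs]
      _ = 1 - Real.sqrt 2 / 2 := by ring
  have hcast : ((Real.sqrt 2 : ℝ) : ℂ)⁻¹ = (((Real.sqrt 2)⁻¹ : ℝ) : ℂ) := by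
    push_cast
    ring
  fin_cases x <;> fin_cases y <;>
    simp only [hadMat, hC, Fintype.sum_bool, Matrix.one_apply, Matrix.cons_val',
      Matrix.cons_val_zero, Matrix.cons_val_one, Matrix.head_cons, Matrix.empty_val',
      Matrix.cons_val_fin_one, Matrix.head_fin_const, hcast, Fin.isValue, if_true, if_false] <;>
    norm_num <;>
    rw [hcast] <;>
    (simp only [Real.cos_pi_div_eight, Real.sin_pi_div_eight] at rcc rcs rss
     have e1 := congrArg (fun r : ℝ => (r : ℂ)) rcc
     have e2 := congrArg (fun r : ℝ => (r : ℂ)) rcs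
     have e3 := congrArg (fun r : ℝ => (r : ℂ)) rss
     push_cast at e1 e2 e3 ⊢
     grind)

lemma conj_hC (x : Fin 2) : (starRingEnd ℂ) (hC x) = hC x := by
  unfold hC; split <;> exact Complex.conj_ofReal _

lemma prod_ite_eq_funext {n : ℕ} (y y' : Fin n → Fin 2) :
    (∏ i, if y i = y' i then (1 : ℂ) else 0) = if y = y' then 1 else 0 := by
  by_cases h : y = y'
  · simp [h]
  · rw [if_neg h]
    obtain ⟨i, hi⟩ := Function.ne_iff.mp h
    exact Finset.prod_eq_zero (Finset.mem_univ i) (if_neg hi)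

lemma hadTensor_inner_self (n : ℕ) (b : Fin n → Bool)
    (ψ : EuclideanSpace ℂ (Fin n → Fin 2)) :
    (inner ℂ (hadTensor n b ψ) (hadTensor n b ψ) : ℂ) = inner ℂ ψ ψ := by
  classical
  simp only [PiLp.inner_apply, RCLike.inner_apply']
  have expand : ∀ x : Fin n → Fin 2,
      (starRingEnd ℂ) (hadTensor n b ψ x) * hadTensor n b ψ x =
        ∑ y : Fin n → Fin 2, ∑ y' : Fin n → Fin 2,
          ((starRingEnd ℂ) (ψ y) * ψ y') *
            ∏ i, (starRingEnd ℂ) (hadMat (b i) (x i) (y i)) * hadMat (b i) (x i) (y' i) := by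
    intro x
    unfold hadTensor
    simp only [WithLp.ofLp_toLp]
    rw [map_sum, Finset.sum_mul_sum]
    refine Finset.sum_congr rfl fun y _ => Finset.sum_congr rfl fun y' _ => ?_
    rw [map_mul, map_prod, Finset.prod_mul_distrib]
    ring
  calc ∑ x, (starRingEnd ℂ) (hadTensor n b ψ x) * hadTensor n b ψ x
      = ∑ x : Fin n → Fin 2, ∑ y : Fin n → Fin 2, ∑ y' : Fin n → Fin 2,
          ((starRingEnd ℂ) (ψ y) * ψ y') *
            ∏ i, (starRingEnd ℂ) (hadMat (b i) (x i) (y i)) * hadMat (b i) (x i) (y' i) :=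
        Finset.sum_congr rfl fun x _ => expand x
    _ = ∑ y : Fin n → Fin 2, ∑ y' : Fin n → Fin 2,
          ((starRingEnd ℂ) (ψ y) * ψ y') *
            ∑ x : Fin n → Fin 2,
              ∏ i, (starRingEnd ℂ) (hadMat (b i) (x i) (y i)) * hadMat (b i) (x i) (y' i) := by
        rw [Finset.sum_comm]
        refine Finset.sum_congr rfl fun y _ => ?_
        rw [Finset.sum_comm]
        refine Finset.sum_congr rfl fun y' _ => ?_
        rw [Finset.mul_sum]
    _ = ∑ y : Fin n → Fin 2, ∑ y' : Fin n → Fin 2,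
          ((starRingEnd ℂ) (ψ y) * ψ y') * if y = y' then 1 else 0 := by
        refine Finset.sum_congr rfl fun y _ => Finset.sum_congr rfl fun y' _ => ?_
        congr 1
        rw [← Fintype.prod_sum fun i x => (starRingEnd ℂ) (hadMat (b i) x (y i)) *
              hadMat (b i) x (y' i)]
        rw [← prod_ite_eq_funext y y']
        exact Finset.prod_congr rfl fun i _ => had_col (b i) (y i) (y' i)
    _ = ∑ y, (starRingEnd ℂ) (ψ y) * ψ y := by
        refine Finset.sum_congr rfl fun y _ => ?_
        simp [Finset.sum_ite_eq' Finset.univ y]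

lemma hadTensor_norm_sq (n : ℕ) (b : Fin n → Bool)
    (ψ : EuclideanSpace ℂ (Fin n → Fin 2)) :
    ‖hadTensor n b ψ‖ ^ 2 = ‖ψ‖ ^ 2 := by
  have h := hadTensor_inner_self n b ψ
  have h1 := @inner_self_eq_norm_sq ℂ _ _ _ _ (hadTensor n b ψ)
  have h2 := @inner_self_eq_norm_sq ℂ _ _ _ _ ψ
  rw [← h1, ← h2, h]

lemma conj_magicH (n : ℕ) (x : Fin n → Fin 2) :
    (starRingEnd ℂ) (magicH n x) = magicH n x := by
  rw [magicH_eq, map_prod]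
  exact Finset.prod_congr rfl fun i _ => conj_hC (x i)

lemma hadTensor_sum_eq (n : ℕ) (φ : EuclideanSpace ℂ (Fin n → Fin 2))
    (horth : (inner ℂ (magicH n) φ : ℂ) = 0) :
    ∑ b : Fin n → Bool, hadTensor n b φ = 0 := by
  classical
  refine PiLp.ext fun x => ?_
  have hx : (∑ b : Fin n → Bool, hadTensor n b φ) x =
      ∑ b : Fin n → Bool, hadTensor n b φ x := by
    exact (congrFun (WithLp.ofLp_sum 2 _ Finset.univ (fun b : Fin n → Bool => hadTensor n b φ)) x).trans
      (Finset.sum_apply x Finset.univ _)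
  rw [hx]
  unfold hadTensor
  simp only [WithLp.ofLp_toLp]
  rw [Finset.sum_comm]
  have key : ∀ y : Fin n → Fin 2,
      ∑ b : Fin n → Bool, (∏ i, hadMat (b i) (x i) (y i)) * φ y =
        2 ^ n * magicH n x * magicH n y * φ y := by
    intro y
    rw [← Finset.sum_mul]
    congr 1
    rw [← Fintype.prod_sum fun i c => hadMat c (x i) (y i)]
    rw [magicH_eq, magicH_eq]
    have : ∏ i : Fin n, (∑ c : Bool, hadMat c (x i) (y i)) =
        ∏ i : Fin n, 2 * hC (x i) * hC (y i) :=
      Finset.prod_congr rfl fun i _ => had_avg (x i) (y i)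
    rw [this, Finset.prod_mul_distrib, Finset.prod_mul_distrib]
    simp [mul_assoc]
  rw [Finset.sum_congr rfl fun y _ => key y]
  have : ∑ y : Fin n → Fin 2, 2 ^ n * magicH n x * magicH n y * φ y =
      2 ^ n * magicH n x * ∑ y, magicH n y * φ y := by
    rw [Finset.mul_sum]; exact Finset.sum_congr rfl fun y _ => by ring
  rw [this]
  have horth' : ∑ y, magicH n y * φ y = 0 := by
    have := horth
    simp only [PiLp.inner_apply, RCLike.inner_apply'] at this
    rw [← this]
    exact Finset.sum_congr rfl fun y _ => by rw [conj_magicH]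
  rw [horth']
  simp

theorem stmt_9 (n : ℕ) (ε : ℝ) (ψ' φ : EuclideanSpace ℂ (Fin n → Fin 2))
    (hψ' : ψ' = magicH n + φ)
    (horth : (inner ℂ (magicH n) φ : ℂ) = 0)
    (hφ : ‖φ‖ ^ 2 = ε) :
    ((1 : ℝ) / 2 ^ n) *
        ∑ b : Fin n → Bool, ‖(1 / 2 : ℂ) • (φ + hadTensor n b φ)‖ ^ 2 ≤ ε / 2 ∧
      ∃ b : Fin n → Bool, ‖(1 / 2 : ℂ) • (φ + hadTensor n b φ)‖ ^ 2 ≤ ε / 2 := by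
  classical
  -- per-term expansion
  have hterm : ∀ b : Fin n → Bool,
      ‖(1 / 2 : ℂ) • (φ + hadTensor n b φ)‖ ^ 2 =
        ε / 2 + (1 / 2) * Complex.re (inner ℂ φ (hadTensor n b φ) : ℂ) := by
    intro b
    rw [norm_smul]
    have hn : ‖(1 / 2 : ℂ)‖ = 1 / 2 := by
      simp
    rw [hn, mul_pow]
    have hadd : ‖φ + hadTensor n b φ‖ ^ 2 =
        ‖φ‖ ^ 2 + 2 * Complex.re (inner ℂ φ (hadTensor n b φ) : ℂ) +
          ‖hadTensor n b φ‖ ^ 2 := by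
      exact norm_add_sq (𝕜 := ℂ) φ (hadTensor n b φ)
    rw [hadd, hadTensor_norm_sq n b φ, hφ]
    ring
  -- sum of inner products is zero
  have hsum0 : ∑ b : Fin n → Bool, (inner ℂ φ (hadTensor n b φ) : ℂ) = 0 := by
    rw [← inner_sum, hadTensor_sum_eq n φ horth, inner_zero_right]
  have hsum : ∑ b : Fin n → Bool, ‖(1 / 2 : ℂ) • (φ + hadTensor n b φ)‖ ^ 2 =
      2 ^ n * (ε / 2) := by
    rw [Finset.sum_congr rfl fun b _ => hterm b, Finset.sum_add_distrib,
      Finset.sum_const, ← Finset.mul_sum]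
    have hre : ∑ b : Fin n → Bool, Complex.re (inner ℂ φ (hadTensor n b φ) : ℂ) = 0 := by
      rw [← Complex.re_sum, hsum0, Complex.zero_re]
    rw [hre, Finset.card_univ]
    have hcard : Fintype.card (Fin n → Bool) = 2 ^ n := by
      simp [Fintype.card_fun]
    rw [hcard]
    push_cast
    ring
  constructor
  · rw [hsum]
    have : (1 : ℝ) / 2 ^ n * (2 ^ n * (ε / 2)) = ε / 2 := by
      field_simp
    rw [this]
  · by_contra hcon
    push_neg at hcon
    have hlt : 2 ^ n * (ε / 2) < ∑ b : Fin n → Bool, ‖(1 / 2 : ℂ) • (φ + hadTensor n b φ)‖ ^ 2 := by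
      have hcard : (Finset.univ : Finset (Fin n → Bool)).card = 2 ^ n := by
        simp [Finset.card_univ, Fintype.card_fun]
      calc (2 : ℝ) ^ n * (ε / 2)
          = ∑ _b : Fin n → Bool, (ε / 2) := by
            rw [Finset.sum_const, hcard]; push_cast; ring
        _ < ∑ b : Fin n → Bool, ‖(1 / 2 : ℂ) • (φ + hadTensor n b φ)‖ ^ 2 :=
            Finset.sum_lt_sum_of_nonempty ⟨fun _ => false, Finset.mem_univ _⟩
              fun b _ => hcon b
    rw [hsum] at hlt
    exact lt_irrefl _ hlt
end

section
/- If a linear subspace V of ℂ^{2^n} contains an open neighborhood (within the set of n-fold product states) of some product state, then V = ℂ^{2^n}. -/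
open scoped InnerProductSpace
open Complex

private lemma swap_lemma {n:ℕ} (g : Fin n → Fin 2 → ℂ) :
    ∏ i, ∑ j, g i j = ∑ S : Fin n → Fin 2, ∏ i, g i (S i) := by
  rw [Finset.prod_univ_sum, Fintype.piFinset_univ]

private lemma sq_norm_one' {E : Type*} [NormedAddCommGroup E] [InnerProductSpace ℂ E]
    (v : E) (hv : ⟪v, v⟫_ℂ = 1) : ‖v‖ = 1 := by
  have h := inner_self_eq_norm_sq (𝕜 := ℂ) v
  rw [hv] at h
  simp at h
  nlinarith [norm_nonneg v, h]

private lemma numeric_lemma (n : ℕ) (ε m P : ℝ) (hε : 0 < ε) (hm0 : 0 < m) (hm12 : m ≤ 1/2)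
    (hmr : m ≤ ε^2/(2*((n:ℝ)+1))) (hPc : (1-m)^n ≤ P) : 2 - 2*P < ε^2 := by
  have hb : 1 - n*m ≤ (1-m)^n := by
    have h := one_add_mul_le_pow (show (-2:ℝ) ≤ -m by linarith) n
    have : (1 + -m)^n = (1-m)^n := by ring_nf
    linarith [this ▸ h]
  have h2 : (0:ℝ) < 2*((n:ℝ)+1) := by positivity
  rw [le_div_iff₀ h2] at hmr
  nlinarith [Nat.cast_nonneg (α := ℝ) n]

def IsProductState (n : ℕ) (v : EuclideanSpace ℂ (Fin n → Fin 2)) : Prop :=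
  ∃ w : Fin n → EuclideanSpace ℂ (Fin 2),
    (∀ i, ‖w i‖ = 1) ∧ ∀ x : Fin n → Fin 2, v x = ∏ i : Fin n, w i (x i)

theorem stmt_17 (n : ℕ) (V : Submodule ℂ (EuclideanSpace ℂ (Fin n → Fin 2)))
    (φ : EuclideanSpace ℂ (Fin n → Fin 2)) (hφ : IsProductState n φ)
    (ε : ℝ) (hε : 0 < ε)
    (hnbhd : ∀ ψ : EuclideanSpace ℂ (Fin n → Fin 2),
      IsProductState n ψ → ‖ψ - φ‖ < ε → ψ ∈ V) :
    V = ⊤ := by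
  obtain ⟨w, hw1, hwφ⟩ := hφ
  -- scalar unit condition
  have hunit : ∀ i, (starRingEnd ℂ) (w i 0) * w i 0 + (starRingEnd ℂ) (w i 1) * w i 1 = 1 := by
    intro i
    have h2 : ⟪w i, w i⟫_ℂ = 1 := by
      rw [inner_self_eq_norm_sq_to_K, hw1 i]; norm_num
    rw [PiLp.inner_apply] at h2
    simpa [RCLike.inner_apply, Fin.sum_univ_two, Complex.conj_mul'] using h2
  -- choice of c, s
  set m : ℝ := min (1/2) (ε^2 / (2*(n+1))) with hm
  have hm0 : 0 < m := lt_min (by norm_num) (by positivity)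
  have hm12 : m ≤ 1/2 := min_le_left _ _
  set c : ℝ := 1 - m with hcdef
  have hc0 : 0 < c := by simp only [hcdef]; linarith
  have hc1 : c < 1 := by simp only [hcdef]; linarith
  set s : ℝ := Real.sqrt (1 - c^2) with hsdef
  have hs0 : 0 < s := Real.sqrt_pos.2 (by nlinarith)
  have hcs : c^2 + s^2 = 1 := by
    rw [hsdef, Real.sq_sqrt (by nlinarith)]; ring
  have hsne : ((s:ℂ)) ≠ 0 := by exact_mod_cast ne_of_gt hs0
  -- perturbed vectors
  set p : Fin n → EuclideanSpace ℂ (Fin 2) :=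
    fun i => WithLp.toLp 2 ![-((starRingEnd ℂ) (w i 1)), (starRingEnd ℂ) (w i 0)] with hp
  set u : Fin n → EuclideanSpace ℂ (Fin 2) :=
    fun i => WithLp.toLp 2 (fun j => (c:ℂ) * w i j + (s:ℂ) * p i j) with hu
  set B : Fin n → Fin 2 → EuclideanSpace ℂ (Fin 2) := fun i => ![w i, u i] with hB
  -- single-qubit inner products
  have hBB : ∀ i t, ∑ j : Fin 2, (starRingEnd ℂ) (B i t j) * B i t j = 1 := by
    intro i t
    fin_cases t
    · simpa [hB, Fin.sum_univ_two] using hunit i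
    · have := hunit i
      have hcs' : ((c:ℂ))^2 + (s:ℂ)^2 = 1 := by exact_mod_cast hcs
      simp only [hB, hu, hp, Fin.mk_zero, Fin.mk_one, Fin.sum_univ_two, Matrix.cons_val_zero,
        Matrix.cons_val_one, Matrix.head_cons, map_add, map_mul, map_neg, Complex.conj_conj,
        Complex.conj_ofReal]
      linear_combination (((c:ℂ))^2 + ((s:ℂ))^2) * this + hcs'
  have hBw : ∀ i t, ∑ j : Fin 2, (starRingEnd ℂ) (B i t j) * w i j
      = if t = 0 then 1 else (c:ℂ) := by
    intro i t
    fin_cases t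
    · simpa [hB, Fin.sum_univ_two] using hunit i
    · have := hunit i
      simp only [hB, hu, hp, Fin.mk_zero, Fin.mk_one, Fin.sum_univ_two, Matrix.cons_val_zero,
        Matrix.cons_val_one, Matrix.head_cons, map_add, map_mul, map_neg, Complex.conj_conj,
        Complex.conj_ofReal]
      rw [if_neg (by decide : ¬((1:Fin 2) = 0))]
      linear_combination ((c:ℂ)) * this
  -- the tensor-product states
  set ψ : (Fin n → Fin 2) → EuclideanSpace ℂ (Fin n → Fin 2) :=
    fun S => WithLp.toLp 2 (fun x => ∏ i, B i (S i) (x i)) with hψ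
  have hinner : ∀ S, ∀ v : Fin n → EuclideanSpace ℂ (Fin 2),
      ⟪ψ S, (WithLp.toLp 2 (fun x => ∏ i, v i (x i)) : EuclideanSpace ℂ (Fin n → Fin 2))⟫_ℂ
        = ∏ i, ∑ j : Fin 2, (starRingEnd ℂ) (B i (S i) j) * v i j := by
    intro S v
    rw [PiLp.inner_apply, swap_lemma]
    apply Finset.sum_congr rfl
    intro x _
    simp only [RCLike.inner_apply, hψ]
    rw [map_prod, ← Finset.prod_mul_distrib]
    exact Finset.prod_congr rfl fun _ _ => mul_comm _ _
  have hBnorm : ∀ i t, ‖B i t‖ = 1 := by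
    intro i t
    apply sq_norm_one'
    rw [PiLp.inner_apply]
    simpa [RCLike.inner_apply, Complex.conj_mul'] using hBB i t
  have hψself : ∀ S, ⟪ψ S, ψ S⟫_ℂ = 1 := by
    intro S
    have h := hinner S (fun i => B i (S i))
    rw [Finset.prod_congr rfl (fun i _ => hBB i (S i)), Finset.prod_const_one] at h
    exact h
  have hψnorm : ∀ S, ‖ψ S‖ = 1 := fun S => sq_norm_one' _ (hψself S)
  have hφeq : φ = (WithLp.toLp 2 (fun x => ∏ i, w i (x i)) : EuclideanSpace ℂ (Fin n → Fin 2)) :=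
    WithLp.ofLp_injective _ (funext hwφ)
  have hφnorm : ‖φ‖ = 1 := by
    rw [hφeq]
    have := hψnorm (fun _ => 0)
    simpa [hψ, hB] using this
  -- membership of the states ψ S
  have hψmem : ∀ S, ψ S ∈ V := by
    intro S
    apply hnbhd _ ⟨fun i => B i (S i), fun i => hBnorm i (S i), fun x => rfl⟩
    -- norm bound
    set P : ℝ := ∏ i, (if S i = 0 then (1:ℝ) else c) with hPdef
    have hre : RCLike.re ⟪ψ S, φ⟫_ℂ = P := by
      rw [hφeq, hinner S w]
      have : ∏ i, (∑ j : Fin 2, (starRingEnd ℂ) (B i (S i) j) * w i j)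
          = ((P : ℝ) : ℂ) := by
        rw [hPdef, Complex.ofReal_prod]
        apply Finset.prod_congr rfl
        intro i _
        rw [hBw i (S i)]
        split <;> simp
      rw [this]
      simp
    have hPc : c^n ≤ P := by
      have h1 : ∏ _i : Fin n, c ≤ P := by
        apply Finset.prod_le_prod (fun i _ => hc0.le)
        intro i _
        split
        · exact hc1.le
        · exact le_refl c
      simpa using h1
    have hnum : 2 - 2*P < ε^2 := by
      apply numeric_lemma n ε m P hε hm0 hm12 (min_le_right _ _)
      rw [← hcdef]; exact hPc
    have hsq : ‖ψ S - φ‖^2 < ε^2 := by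
      rw [norm_sub_sq (𝕜 := ℂ), hψnorm S, hφnorm, hre]
      linarith
    exact lt_of_pow_lt_pow_left₀ 2 hε.le hsq
  -- coefficients expressing standard basis vectors in terms of B
  set η : Fin n → Fin 2 → ℂ := fun i => ![-(w i 1), w i 0] with hη
  set C : Fin n → Fin 2 → Fin 2 → ℂ :=
    fun i k => ![(starRingEnd ℂ) (w i k) - ((c:ℂ)/(s:ℂ)) * η i k, η i k / (s:ℂ)] with hC
  have hkey : ∀ i (k j : Fin 2), ∑ t : Fin 2, C i k t * B i t j = if k = j then 1 else 0 := by
    intro i k j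
    have h1 := hunit i
    fin_cases k <;> fin_cases j <;>
      simp only [hC, hη, hB, hu, hp, Fin.mk_zero, Fin.mk_one, Fin.sum_univ_two,
        Matrix.cons_val_zero, Matrix.cons_val_one, Matrix.head_cons]
    · rw [if_pos trivial]; field_simp; linear_combination (s:ℂ) * h1
    · rw [if_neg (by decide : ¬((0:Fin 2) = 1))]; field_simp; ring
    · rw [if_neg (by decide : ¬((1:Fin 2) = 0))]; field_simp; ring
    · rw [if_pos trivial]; field_simp; linear_combination (s:ℂ) * h1
  -- standard basis vectors are in V
  have hE : ∀ y : Fin n → Fin 2,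
      (WithLp.toLp 2 (fun x => if x = y then (1:ℂ) else 0) : EuclideanSpace ℂ (Fin n → Fin 2)) ∈ V := by
    intro y
    have hrepr : (WithLp.toLp 2 (fun x => if x = y then (1:ℂ) else 0) : EuclideanSpace ℂ (Fin n → Fin 2))
        = ∑ S : Fin n → Fin 2, (∏ i, C i (y i) (S i)) • ψ S := by
      ext x
      have happ : (∑ S : Fin n → Fin 2, (∏ i, C i (y i) (S i)) • ψ S) x
          = ∑ S : Fin n → Fin 2, (∏ i, C i (y i) (S i)) * (∏ i, B i (S i) (x i)) := by
        rw [show (∑ S : Fin n → Fin 2, (∏ i, C i (y i) (S i)) • ψ S) x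
            = ∑ S : Fin n → Fin 2, ((∏ i, C i (y i) (S i)) • ψ S) x from
          by rw [WithLp.ofLp_sum]; exact Finset.sum_apply _ _ _]
        exact Finset.sum_congr rfl fun S _ => rfl
      have hc2 : ∑ S : Fin n → Fin 2, (∏ i, C i (y i) (S i)) * (∏ i, B i (S i) (x i))
          = ∏ i, ∑ t : Fin 2, C i (y i) t * B i t (x i) := by
        rw [swap_lemma]
        apply Finset.sum_congr rfl
        intro S _
        rw [Finset.prod_mul_distrib]
      have hc3 : (∏ i, ∑ t : Fin 2, C i (y i) t * B i t (x i))
          = if x = y then 1 else 0 := by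
        have : ∀ i, (∑ t : Fin 2, C i (y i) t * B i t (x i)) = if y i = x i then 1 else 0 :=
          fun i => hkey i (y i) (x i)
        rw [Finset.prod_congr rfl (fun i _ => this i)]
        by_cases hxy : x = y
        · simp [hxy]
        · have : ∃ i, y i ≠ x i := by
            by_contra hcon
            push_neg at hcon
            exact hxy (funext fun i => (hcon i).symm)
          obtain ⟨i, hi⟩ := this
          rw [if_neg hxy]
          exact Finset.prod_eq_zero (Finset.mem_univ i) (if_neg hi)
      show (if x = y then (1:ℂ) else 0) = _
      rw [happ, hc2, hc3]
    rw [hrepr]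
    exact Submodule.sum_mem _ fun S _ => Submodule.smul_mem _ _ (hψmem S)
  -- conclude
  rw [eq_top_iff]
  rintro v -
  have hv : v = ∑ y : Fin n → Fin 2,
      v y • (WithLp.toLp 2 (fun x => if x = y then (1:ℂ) else 0) : EuclideanSpace ℂ (Fin n → Fin 2)) := by
    ext x
    have : (∑ y : Fin n → Fin 2,
        v y • (WithLp.toLp 2 (fun x => if x = y then (1:ℂ) else 0) : EuclideanSpace ℂ (Fin n → Fin 2))) x
        = ∑ y : Fin n → Fin 2, v y * (if x = y then (1:ℂ) else 0) := by
      rw [show (∑ y : Fin n → Fin 2,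
          v y • (WithLp.toLp 2 (fun x => if x = y then (1:ℂ) else 0) : EuclideanSpace ℂ (Fin n → Fin 2))) x
          = ∑ y : Fin n → Fin 2,
            (v y • (WithLp.toLp 2 (fun x => if x = y then (1:ℂ) else 0) : EuclideanSpace ℂ (Fin n → Fin 2))) x from
        by rw [WithLp.ofLp_sum]; exact Finset.sum_apply _ _ _]
      exact Finset.sum_congr rfl fun y _ => rfl
    rw [this]
    simp [mul_ite, Finset.sum_ite_eq]
  rw [hv]
  exact Submodule.sum_mem _ fun y _ => Submodule.smul_mem _ _ (hE y)
end

section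
/- Let S be a finite set of vectors in ℂ^{2^n} whose union of all spans of (2^n − 1)-element subsets is denoted U. Then the set of product states not in U (equivalently: product states with S-rank exactly 2^n) is open in the set of product states, and nonempty implies dense; in fact it is open and dense in the set of product states. -/
open Finset Function Submodule

noncomputable def PhiAux (n : ℕ) (z : Fin n → EuclideanSpace ℂ (Fin 2)) :
    EuclideanSpace ℂ (Fin n → Fin 2) := WithLp.toLp 2 (fun x => ∏ i, z i (x i))

lemma PhiAux_continuous (n : ℕ) : Continuous (PhiAux n) := by
  have h : Continuous fun (z : Fin n → EuclideanSpace ℂ (Fin 2)) =>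
      (fun x : Fin n → Fin 2 => ∏ i, z i (x i)) := by
    apply continuous_pi; intro x
    exact continuous_finset_prod _ fun i _ =>
      ((continuous_apply (x i)).comp (PiLp.continuous_ofLp 2 _)).comp (continuous_apply i)
  exact (PiLp.continuous_toLp 2 _).comp h

lemma PhiAux_update_apply (n : ℕ) (z : Fin n → EuclideanSpace ℂ (Fin 2)) (i : Fin n)
    (c : EuclideanSpace ℂ (Fin 2)) (x : Fin n → Fin 2) :
    PhiAux n (update z i c) x = c (x i) * ∏ j ∈ {i}ᶜ, z j (x j) := by
  rw [show PhiAux n (update z i c) x = ∏ j, update z i c j (x j) from rfl,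
    Fintype.prod_eq_mul_prod_compl i, update_self]
  congr 1
  refine Finset.prod_congr rfl fun j hj => ?_
  have hji : j ≠ i := by simpa using hj
  rw [update_of_ne hji]

lemma PhiAux_update_add (n : ℕ) (z : Fin n → EuclideanSpace ℂ (Fin 2)) (i : Fin n)
    (a b : EuclideanSpace ℂ (Fin 2)) :
    PhiAux n (update z i (a + b)) = PhiAux n (update z i a) + PhiAux n (update z i b) := by
  ext x
  have h0 : (PhiAux n (update z i a) + PhiAux n (update z i b)) x
      = PhiAux n (update z i a) x + PhiAux n (update z i b) x := rfl
  rw [h0, PhiAux_update_apply, PhiAux_update_apply, PhiAux_update_apply]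
  have h1 : (a + b) (x i) = a (x i) + b (x i) := rfl
  rw [h1]; ring

lemma PhiAux_update_smul (n : ℕ) (z : Fin n → EuclideanSpace ℂ (Fin 2)) (i : Fin n)
    (c : ℂ) (a : EuclideanSpace ℂ (Fin 2)) :
    PhiAux n (update z i (c • a)) = c • PhiAux n (update z i a) := by
  ext x
  have h0 : (c • PhiAux n (update z i a)) x = c * PhiAux n (update z i a) x := rfl
  rw [h0, PhiAux_update_apply, PhiAux_update_apply]
  have h1 : (c • a) (x i) = c * a (x i) := rfl
  rw [h1]; ring

/-- Local-to-global: if `Φ z ∈ W` on a pointwise δ-ball around `w`, then everywhere. -/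
lemma PhiAux_mem_of_ball (n : ℕ) (W : Submodule ℂ (EuclideanSpace ℂ (Fin n → Fin 2)))
    (w : Fin n → EuclideanSpace ℂ (Fin 2)) {δ : ℝ} (hδ : 0 < δ)
    (H : ∀ z, (∀ i, dist (z i) (w i) < δ) → PhiAux n z ∈ W) :
    ∀ z, PhiAux n z ∈ W := by
  suffices h : ∀ m : ℕ, ∀ z, (∀ i : Fin n, m ≤ (i : ℕ) → dist (z i) (w i) < δ) →
      PhiAux n z ∈ W by
    exact fun z => h n z (fun i hi => absurd i.isLt (by omega))
  intro m
  induction m with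
  | zero => exact fun z hz => H z fun i => hz i (Nat.zero_le _)
  | succ m ih =>
    intro z hz
    by_cases hmn : m < n
    · set k : Fin n := ⟨m, hmn⟩ with hk
      set u : EuclideanSpace ℂ (Fin 2) := z k - w k with hu
      have hcond : ∀ (c : EuclideanSpace ℂ (Fin 2)), dist c (w k) < δ →
          (∀ i : Fin n, m ≤ (i : ℕ) → dist (update z k c i) (w i) < δ) := by
        intro c hc i hi
        rcases eq_or_ne i k with rfl | hik
        · rwa [update_self]
        · rw [update_of_ne hik]
          refine hz i ?_
          have : (i : ℕ) ≠ m := fun h => hik (Fin.ext (by rw [h, hk]))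
          omega
      have ha : PhiAux n (update z k (w k)) ∈ W :=
        ih _ (hcond _ (by simpa using hδ))
      set s : ℝ := δ / (2 * (‖u‖ + 1)) with hs_def
      have hs : 0 < s := by positivity
      have hsu : dist (w k + (s : ℂ) • u) (w k) < δ := by
        rw [dist_eq_norm, add_sub_cancel_left, norm_smul, Complex.norm_real,
          Real.norm_of_nonneg hs.le]
        have h1 : s * ‖u‖ < s * (2 * (‖u‖ + 1)) := by
          have := norm_nonneg u; nlinarith
        have h2 : s * (2 * (‖u‖ + 1)) = δ := by
          rw [hs_def]; field_simp
        linarith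
      have hb0 : PhiAux n (update z k (w k + (s : ℂ) • u)) ∈ W := ih _ (hcond _ hsu)
      rw [PhiAux_update_add, PhiAux_update_smul] at hb0
      have hb1 : (s : ℂ) • PhiAux n (update z k u) ∈ W := by
        have := W.sub_mem hb0 ha
        rwa [add_sub_cancel_left] at this
      have hb : PhiAux n (update z k u) ∈ W := by
        have := W.smul_mem ((s : ℂ))⁻¹ hb1
        rwa [inv_smul_smul₀ (by exact_mod_cast hs.ne')] at this
      have hzeq : z = update z k (w k + u) := by
        funext j
        rcases eq_or_ne j k with rfl | h
        · rw [update_self, hu]; abel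
        · rw [update_of_ne h]
      rw [hzeq, PhiAux_update_add]
      exact W.add_mem ha hb
    · exact ih z fun i hi => absurd i.isLt (by omega)

lemma dense_open_biInter_finset {X : Type*} [TopologicalSpace X] {ι : Type*}
    {s : Finset ι} {f : ι → Set X} (ho : ∀ i ∈ s, IsOpen (f i)) (hd : ∀ i ∈ s, Dense (f i)) :
    Dense (⋂ i ∈ s, f i) := by
  classical
  induction s using Finset.induction with
  | empty => simp
  | @insert a s ha ih =>
    rw [Finset.set_biInter_insert]
    exact (hd a (Finset.mem_insert_self a s)).inter_of_isOpen_left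
      (ih (fun i hi => ho i (Finset.mem_insert_of_mem hi))
        (fun i hi => hd i (Finset.mem_insert_of_mem hi)))
      (ho a (Finset.mem_insert_self a s))

/-- A proper subspace misses a dense (relatively) set of product states. -/
lemma dense_not_mem_submodule (n : ℕ) (W : Submodule ℂ (EuclideanSpace ℂ (Fin n → Fin 2)))
    (hW : W ≠ ⊤) :
    Dense {p : {v // IsProductState n v} |
      (p : EuclideanSpace ℂ (Fin n → Fin 2)) ∉ (W : Set (EuclideanSpace ℂ (Fin n → Fin 2)))} := by
  classical
  rw [Metric.dense_iff]
  intro p ε hε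
  by_contra hc
  have H0 : ∀ q : {v // IsProductState n v}, dist q p < ε →
      (q : EuclideanSpace ℂ (Fin n → Fin 2)) ∈ W := by
    intro q hq
    by_contra hnq
    exact hc ⟨q, Metric.mem_ball.mpr hq, hnq⟩
  obtain ⟨w, hw1, hw2⟩ := p.2
  have hv : (p : EuclideanSpace ℂ (Fin n → Fin 2)) = PhiAux n w := PiLp.ext fun x => hw2 x
  obtain ⟨δ, hδ, hδ'⟩ :=
    Metric.continuousAt_iff.mp ((PhiAux_continuous n).continuousAt (x := w)) ε hε
  set δ' : ℝ := min (δ / 2) (1 / 2) with hδ'def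
  have hδ'pos : 0 < δ' := by
    apply lt_min (by linarith) (by norm_num)
  have H : ∀ z, (∀ i, dist (z i) (w i) < δ') → PhiAux n z ∈ W := by
    intro z hz
    have hzn : ∀ i, (1/2 : ℝ) < ‖z i‖ := by
      intro i
      have h1 : ‖w i‖ - ‖z i‖ ≤ ‖w i - z i‖ := norm_sub_norm_le _ _
      have h2 : ‖w i - z i‖ = dist (z i) (w i) := by
        rw [dist_eq_norm, norm_sub_rev]
      have h3 : dist (z i) (w i) < 1/2 := lt_of_lt_of_le (hz i) (min_le_right _ _)
      have := hw1 i
      linarith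
    have hz0 : ∀ i, ‖z i‖ ≠ 0 := fun i => by have := hzn i; linarith
    set zc : Fin n → EuclideanSpace ℂ (Fin 2) := fun i => ((‖z i‖ : ℂ))⁻¹ • z i with hzc
    have hnorm : ∀ i, ‖zc i‖ = 1 := by
      intro i
      rw [hzc]
      simp only [norm_smul, norm_inv, Complex.norm_real, Real.norm_of_nonneg (norm_nonneg _)]
      exact inv_mul_cancel₀ (hz0 i)
    have hdist : ∀ i, dist (zc i) (w i) < δ := by
      intro i
      have h1 : dist (zc i) (z i) ≤ dist (z i) (w i) := by
        rw [dist_eq_norm, hzc]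
        have : ((‖z i‖ : ℂ))⁻¹ • z i - z i = (((‖z i‖ : ℂ))⁻¹ - 1) • z i := by
          rw [sub_smul, one_smul]
        rw [this, norm_smul]
        have hcast : ((‖z i‖ : ℂ))⁻¹ - 1 = ((‖z i‖⁻¹ - 1 : ℝ) : ℂ) := by push_cast; ring
        rw [hcast, Complex.norm_real, Real.norm_eq_abs]
        have hmul : |‖z i‖⁻¹ - 1| * ‖z i‖ = |1 - ‖z i‖| := by
          have hkey : (‖z i‖⁻¹ - 1) * ‖z i‖ = 1 - ‖z i‖ := by
            rw [sub_mul, one_mul, inv_mul_cancel₀ (hz0 i)]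
          calc |‖z i‖⁻¹ - 1| * ‖z i‖ = |(‖z i‖⁻¹ - 1) * ‖z i‖| := by
                rw [abs_mul, abs_of_nonneg (norm_nonneg _)]
            _ = |1 - ‖z i‖| := by rw [hkey]
        rw [hmul]
        have hb := abs_norm_sub_norm_le (w i) (z i)
        rw [hw1 i] at hb
        have hrev : ‖w i - z i‖ = dist (z i) (w i) := by rw [dist_eq_norm, norm_sub_rev]
        rw [hrev] at hb
        exact hb
      have h2 := hz i
      have h3 : δ' ≤ δ / 2 := min_le_left _ _
      calc dist (zc i) (w i) ≤ dist (zc i) (z i) + dist (z i) (w i) := dist_triangle _ _ _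
        _ < δ' + δ' := by linarith
        _ ≤ δ := by linarith
    have hmem : PhiAux n zc ∈ W := by
      have hps : IsProductState n (PhiAux n zc) := ⟨zc, hnorm, fun x => rfl⟩
      have hq : dist (PhiAux n zc) (PhiAux n w) < ε :=
        hδ' ((dist_pi_lt_iff hδ).mpr hdist)
      exact H0 ⟨PhiAux n zc, hps⟩ (by rw [Subtype.dist_eq, hv]; exact hq)
    have hscale : PhiAux n z = (∏ i, (‖z i‖ : ℂ)) • PhiAux n zc := by
      ext x
      have h0 : ((∏ i, (‖z i‖ : ℂ)) • PhiAux n zc) x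
          = (∏ i, (‖z i‖ : ℂ)) * ∏ i, zc i (x i) := rfl
      rw [h0]
      have h1 : ∀ i, zc i (x i) = ((‖z i‖ : ℂ))⁻¹ * z i (x i) := fun i => rfl
      simp only [h1]
      have h2 : ∏ i, ((‖z i‖ : ℂ) * ((‖z i‖ : ℂ))⁻¹) = 1 := by
        apply Finset.prod_eq_one
        intro i _
        exact mul_inv_cancel₀ (by exact_mod_cast hz0 i)
      rw [Finset.prod_mul_distrib, ← mul_assoc, ← Finset.prod_mul_distrib, h2, one_mul]
      rfl
    rw [hscale]
    exact W.smul_mem _ hmem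
  have hall := PhiAux_mem_of_ball n W w hδ'pos H
  apply hW
  rw [eq_top_iff]
  rw [← (EuclideanSpace.basisFun (Fin n → Fin 2) ℂ).toBasis.span_eq]
  apply span_le.mpr
  rintro _ ⟨x, rfl⟩
  have hsingle : (EuclideanSpace.basisFun (Fin n → Fin 2) ℂ).toBasis x
      = PhiAux n (fun i => EuclideanSpace.single (x i) 1) := by
    rw [show (EuclideanSpace.basisFun (Fin n → Fin 2) ℂ).toBasis x
        = (EuclideanSpace.basisFun (Fin n → Fin 2) ℂ) x from
      congrFun (OrthonormalBasis.coe_toBasis _) x]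
    rw [EuclideanSpace.basisFun_apply]
    ext y
    rw [show PhiAux n (fun i => EuclideanSpace.single (x i) 1) y
      = ∏ i, EuclideanSpace.single (x i) (1 : ℂ) (y i) from rfl]
    simp only [EuclideanSpace.single_apply]
    by_cases hxy : y = x
    · subst hxy; simp
    · rw [if_neg hxy]
      obtain ⟨i, hi⟩ := Function.ne_iff.mp hxy
      symm
      refine Finset.prod_eq_zero (Finset.mem_univ i) ?_
      exact if_neg hi
  rw [hsingle]
  exact hall _

theorem stmt_18 (n : ℕ) (S : Finset (EuclideanSpace ℂ (Fin n → Fin 2)))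
    (U : Set (EuclideanSpace ℂ (Fin n → Fin 2)))
    (hU : U = {v | ∃ t : Finset (EuclideanSpace ℂ (Fin n → Fin 2)),
      t ⊆ S ∧ t.card = 2 ^ n - 1 ∧ v ∈ Submodule.span ℂ (t : Set _)}) :
    IsOpen {p : {v // IsProductState n v} | (p : EuclideanSpace ℂ (Fin n → Fin 2)) ∉ U} ∧
      Dense {p : {v // IsProductState n v} | (p : EuclideanSpace ℂ (Fin n → Fin 2)) ∉ U} := by
  classical
  have hUeq : U = ⋃ t ∈ S.powersetCard (2 ^ n - 1),
      (Submodule.span ℂ (t : Set (EuclideanSpace ℂ (Fin n → Fin 2))) :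
        Set (EuclideanSpace ℂ (Fin n → Fin 2))) := by
    rw [hU]; ext v
    simp only [Set.mem_setOf_eq, Set.mem_iUnion, Finset.mem_powersetCard, SetLike.mem_coe,
      exists_prop]
    constructor
    · rintro ⟨t, h1, h2, h3⟩; exact ⟨t, ⟨h1, h2⟩, h3⟩
    · rintro ⟨t, ⟨h1, h2⟩, h3⟩; exact ⟨t, h1, h2, h3⟩
  have hne : ∀ t : Finset (EuclideanSpace ℂ (Fin n → Fin 2)), t.card = 2 ^ n - 1 →
      Submodule.span ℂ (t : Set (EuclideanSpace ℂ (Fin n → Fin 2))) ≠ ⊤ := by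
    intro t ht
    apply ne_of_lt
    apply span_lt_top_of_card_lt_finrank
    rw [Finset.toFinset_coe, ht, finrank_euclideanSpace]
    have h1 : Fintype.card (Fin n → Fin 2) = 2 ^ n := by simp
    rw [h1]
    have : 0 < 2 ^ n := Nat.pow_pos (by norm_num)
    omega
  constructor
  · have hclosed : IsClosed U := by
      rw [hUeq]
      exact isClosed_biUnion_finset fun t _ => (Submodule.span ℂ _).closed_of_finiteDimensional
    have : {p : {v // IsProductState n v} |
        (p : EuclideanSpace ℂ (Fin n → Fin 2)) ∉ U} = Subtype.val ⁻¹' Uᶜ := rfl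
    rw [this]
    exact hclosed.isOpen_compl.preimage continuous_subtype_val
  · have hset : {p : {v // IsProductState n v} |
        (p : EuclideanSpace ℂ (Fin n → Fin 2)) ∉ U}
        = ⋂ t ∈ S.powersetCard (2 ^ n - 1),
          {p : {v // IsProductState n v} | (p : EuclideanSpace ℂ (Fin n → Fin 2)) ∉
            (Submodule.span ℂ (t : Set (EuclideanSpace ℂ (Fin n → Fin 2))) :
              Set (EuclideanSpace ℂ (Fin n → Fin 2)))} := by
      ext p
      simp [hUeq]
    rw [hset]
    apply dense_open_biInter_finset
    · intro t _
      have hclosed : IsClosed (Submodule.span ℂ (t : Set (EuclideanSpace ℂ (Fin n → Fin 2))) :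
          Set (EuclideanSpace ℂ (Fin n → Fin 2))) :=
        (Submodule.span ℂ _).closed_of_finiteDimensional
      exact hclosed.isOpen_compl.preimage continuous_subtype_val
    · intro t htmem
      exact dense_not_mem_submodule n _ (hne t (Finset.mem_powersetCard.mp htmem).2)
end
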